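/- Let {φ_ℓ}_{ℓ=1}^p be an orthonormal family in a complex Hilbert space H, and let ψ_1,…,ψ_q ∈ H satisfy the Riesz-type bounds r₁‖b‖₂² ≤ ‖Σ_{k=1}^q b_k ψ_k‖² ≤ r₂‖b‖₂² for all b ∈ ℂ^q, where 0 < r₁ ≤ r₂. Let G := span{φ_1,…,φ_p}, F := span{ψ_1,…,ψ_q}, and let A ∈ ℂ^{q×p} have entries A_{kℓ} = ⟨φ_ℓ, ψ_k⟩, with σ_min(A) := √(λ_min(AᴴA)). Then √r₁ · cos∠(G,F) ≤ σ_min(A) ≤ √r₂ · cos∠(G,F); in particular, if cos∠(G,F) > 0 then 1/cos∠(G,F) ≤ √r₂ / σ_min(A) ≤ √(r₂/r₁) · (1/cos∠(G,F)). -/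

import Mathlib

section Aux

lemma aux_conjpair (z : ℂ) : z * (starRingEnd ℂ) z = ((‖z‖ ^ 2 : ℝ) : ℂ) := by
  rw [Complex.mul_conj]
  simp [Complex.normSq_eq_norm_sq, ← Complex.ofReal_pow]

lemma aux_sq_le {a b : ℝ} (h : a ^ 2 ≤ b ^ 2) (hb : 0 ≤ b) : a ≤ b := by
  nlinarith [sq_nonneg (a - b), sq_nonneg (a + b)]

end Aux

/-- `cos∠(A,B) := inf{‖Q_B a‖ : a ∈ A, ‖a‖ = 1}`. -/
noncomputable def cosAngle {H : Type*} [NormedAddCommGroup H] [InnerProductSpace ℂ H]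
    (A B : Submodule ℂ H) [CompleteSpace B] : ℝ :=
  sInf ((fun a => ‖(Submodule.orthogonalProjection B a : H)‖) '' {a : H | a ∈ A ∧ ‖a‖ = 1})

/-- The minimal eigenvalue of a (Hermitian) complex matrix: the smallest real number in its
spectrum. -/
noncomputable def lambdaMin {n : Type*} [Fintype n] [DecidableEq n] (M : Matrix n n ℂ) : ℝ :=
  sInf {r : ℝ | (r : ℂ) ∈ spectrum ℂ M}

/-- The minimal singular value `σ_min(A) := √(λ_min(AᴴA))`. -/
noncomputable def sigmaMin {q p : ℕ} (A : Matrix (Fin q) (Fin p) ℂ) : ℝ :=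
  Real.sqrt (lambdaMin (A.conjTranspose * A))

section MatrixAux

open Matrix

/-- Rayleigh-quotient characterization of `lambdaMin (Aᴴ * A)`. -/
lemma aux_lambdaMin_rayleigh {q p : ℕ} (hp : 0 < p) (A : Matrix (Fin q) (Fin p) ℂ) :
    0 ≤ lambdaMin (Aᴴ * A) ∧
    (∃ x : EuclideanSpace ℂ (Fin p), ‖x‖ = 1 ∧
      ∑ k, ‖(A *ᵥ (x : Fin p → ℂ)) k‖ ^ 2 = lambdaMin (Aᴴ * A)) ∧
    (∀ x : EuclideanSpace ℂ (Fin p), ‖x‖ = 1 →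
      lambdaMin (Aᴴ * A) ≤ ∑ k, ‖(A *ᵥ (x : Fin p → ℂ)) k‖ ^ 2) := by
  haveI : Nonempty (Fin p) := ⟨⟨0, hp⟩⟩
  have hM : (Aᴴ * A).IsHermitian := isHermitian_conjTranspose_mul_self A
  set M := Aᴴ * A with hMdef
  set b := hM.eigenvectorBasis with hbdef
  set mv : EuclideanSpace ℂ (Fin p) → EuclideanSpace ℂ (Fin p) :=
    fun x => (WithLp.equiv 2 (Fin p → ℂ)).symm (M *ᵥ x) with hmvdef
  -- quadratic form equals sum of squares
  have hquad : ∀ x : EuclideanSpace ℂ (Fin p),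
      Complex.re (inner ℂ x (mv x)) = ∑ k, ‖(A *ᵥ (x : Fin p → ℂ)) k‖ ^ 2 := by
    intro x
    simp only [EuclideanSpace.inner_eq_star_dotProduct, dotProduct_comm _ (star _)]
    show Complex.re (dotProduct (star (x : Fin p → ℂ)) (M *ᵥ x)) = _
    rw [hMdef, ← mulVec_mulVec, dotProduct_mulVec, ← star_mulVec]
    have : dotProduct (star (A *ᵥ (x : Fin p → ℂ))) (A *ᵥ (x : Fin p → ℂ))
        = ∑ k, (Complex.normSq ((A *ᵥ (x : Fin p → ℂ)) k) : ℂ) := by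
      simp [dotProduct, Complex.normSq_eq_conj_mul_self]
    rw [this, Complex.re_sum]
    simp [Complex.normSq_eq_norm_sq, ← Complex.ofReal_pow]
  -- eigenvector images
  have hMb : ∀ (i : Fin p) (x : EuclideanSpace ℂ (Fin p)),
      (inner ℂ (b i) (mv x) : ℂ) = (hM.eigenvalues i : ℂ) * inner ℂ (b i) x := by
    intro i x
    simp only [EuclideanSpace.inner_eq_star_dotProduct, dotProduct_comm _ (star _)]
    show dotProduct (star ⇑(b i)) (M *ᵥ x)
      = (hM.eigenvalues i : ℂ) * dotProduct (star ⇑(b i)) x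
    rw [dotProduct_mulVec]
    have h1 : star ⇑(b i) ᵥ* M = star (M *ᵥ ⇑(b i)) := by
      rw [star_mulVec, hM.eq]
    rw [h1, hM.mulVec_eigenvectorBasis, star_smul]
    simp [smul_dotProduct, Complex.real_smul, ← hbdef]
  -- Rayleigh expansion
  have hray : ∀ x : EuclideanSpace ℂ (Fin p),
      Complex.re (inner ℂ x (mv x)) = ∑ i, hM.eigenvalues i * ‖(inner ℂ (b i) x : ℂ)‖ ^ 2 := by
    intro x
    have h2 : (inner ℂ x (mv x) : ℂ)
        = ∑ i, (inner ℂ x (b i) : ℂ) * inner ℂ (b i) (mv x) :=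
      (b.sum_inner_mul_inner x (mv x)).symm
    have h3 : ∀ i, (inner ℂ x (b i) : ℂ) * inner ℂ (b i) x
        = (‖(inner ℂ (b i) x : ℂ)‖ ^ 2 : ℝ) := by
      intro i
      rw [← inner_conj_symm (b i) x, aux_conjpair, RCLike.norm_conj]
    rw [h2]
    simp_rw [hMb]
    rw [Complex.re_sum]
    refine Finset.sum_congr rfl fun i _ => ?_
    rw [show (inner ℂ x (b i) : ℂ) * ((hM.eigenvalues i : ℂ) * inner ℂ (b i) x)
      = (hM.eigenvalues i : ℂ) * ((inner ℂ x (b i) : ℂ) * inner ℂ (b i) x) by ring,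
      h3 i, ← Complex.ofReal_mul, Complex.ofReal_re]
  -- Parseval
  have hpars : ∀ x : EuclideanSpace ℂ (Fin p), ∑ i, ‖(inner ℂ (b i) x : ℂ)‖ ^ 2 = ‖x‖ ^ 2 := by
    intro x
    have h2 : (inner ℂ x x : ℂ) = ∑ i, (inner ℂ x (b i) : ℂ) * inner ℂ (b i) x :=
      (b.sum_inner_mul_inner x x).symm
    have h4 := congrArg Complex.re h2
    have h5 : Complex.re (inner ℂ x x) = ‖x‖ ^ 2 := by
      simpa using @inner_self_eq_norm_sq ℂ _ _ _ _ x
    rw [h5, Complex.re_sum] at h4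
    rw [h4]
    refine Finset.sum_congr rfl fun i _ => ?_
    rw [← inner_conj_symm (b i) x, aux_conjpair, RCLike.norm_conj, Complex.ofReal_re]
  -- minimal eigenvalue
  obtain ⟨i₀, hi₀⟩ := Finite.exists_min hM.eigenvalues
  have hspecR : {r : ℝ | (r : ℂ) ∈ spectrum ℂ M} = Set.range hM.eigenvalues := by
    ext r
    have : ((r : ℂ) ∈ spectrum ℂ M) ↔ r ∈ spectrum ℝ M := by
      rw [show ((r : ℂ)) = algebraMap ℝ ℂ r from rfl, spectrum.algebraMap_mem_iff]
    rw [Set.mem_setOf_eq, this, hM.spectrum_real_eq_range_eigenvalues]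
  have hlmin : lambdaMin M = hM.eigenvalues i₀ := by
    show sInf _ = _
    rw [hspecR]
    refine le_antisymm (csInf_le ⟨hM.eigenvalues i₀, ?_⟩ ⟨i₀, rfl⟩)
      (le_csInf (Set.range_nonempty _) ?_)
    · rintro _ ⟨i, rfl⟩; exact hi₀ i
    · rintro _ ⟨i, rfl⟩; exact hi₀ i
  -- value at eigenvector i₀
  have h6 : Complex.re (inner ℂ (b i₀) (mv (b i₀))) = hM.eigenvalues i₀ := by
    rw [hray (b i₀)]
    have horto := orthonormal_iff_ite.mp b.orthonormal
    have : ∀ i, hM.eigenvalues i * ‖(inner ℂ (b i) (b i₀) : ℂ)‖ ^ 2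
        = if i = i₀ then hM.eigenvalues i else 0 := by
      intro i
      rw [horto i i₀]
      by_cases h : i = i₀ <;> simp [h]
    simp_rw [this]
    simp
  have hx₀norm : ‖b i₀‖ = 1 := b.orthonormal.1 i₀
  have hlminval : ∑ k, ‖(A *ᵥ ((b i₀ : EuclideanSpace ℂ (Fin p)) : Fin p → ℂ)) k‖ ^ 2
      = lambdaMin M := by
    rw [← hquad (b i₀), h6, hlmin]
  refine ⟨?_, ⟨b i₀, hx₀norm, hlminval⟩, ?_⟩
  · rw [← hlminval]
    exact Finset.sum_nonneg fun k _ => sq_nonneg _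
  · intro x hx
    rw [← hquad x, hlmin, hray x]
    calc hM.eigenvalues i₀ = hM.eigenvalues i₀ * ∑ i, ‖(inner ℂ (b i) x : ℂ)‖ ^ 2 := by
          rw [hpars x, hx, one_pow, mul_one]
    _ = ∑ i, hM.eigenvalues i₀ * ‖(inner ℂ (b i) x : ℂ)‖ ^ 2 := Finset.mul_sum _ _ _
    _ ≤ ∑ i, hM.eigenvalues i * ‖(inner ℂ (b i) x : ℂ)‖ ^ 2 :=
        Finset.sum_le_sum fun i _ => mul_le_mul_of_nonneg_right (hi₀ i) (sq_nonneg _)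

end MatrixAux

section FrameAux

variable {H : Type*} [NormedAddCommGroup H] [InnerProductSpace ℂ H] [CompleteSpace H]
variable {q : ℕ} {ψ : Fin q → H} {r₁ r₂ : ℝ}

lemma aux_frame_upper (hr₂ : 0 < r₂)
    (hriesz : ∀ b : Fin q → ℂ, ‖∑ k, b k • ψ k‖ ^ 2 ≤ r₂ * ∑ k, ‖b k‖ ^ 2)
    (f : H) : ∑ k, ‖(inner ℂ (ψ k) f : ℂ)‖ ^ 2 ≤ r₂ * ‖f‖ ^ 2 := by
  set β : Fin q → ℂ := fun k => inner ℂ (ψ k) f with hβ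
  set S : ℝ := ∑ k, ‖β k‖ ^ 2 with hS
  have habs : ∀ b : Fin q → ℂ, ∑ k, ‖b k‖ ^ 2 = ∑ k, ‖b k‖ ^ 2 := by
    intro b; rfl
  have hS0 : 0 ≤ S := Finset.sum_nonneg fun k _ => sq_nonneg _
  have hg : (inner ℂ (∑ k, β k • ψ k) f : ℂ) = (S : ℂ) := by
    rw [sum_inner, hS, Complex.ofReal_sum]
    refine Finset.sum_congr rfl fun k _ => ?_
    rw [inner_smul_left]
    show (starRingEnd ℂ) (β k) * β k = _
    rw [mul_comm, aux_conjpair]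
  have h1 : S ≤ ‖(∑ k, β k • ψ k)‖ * ‖f‖ := by
    calc S = Complex.re (inner ℂ (∑ k, β k • ψ k) f : ℂ) := by rw [hg, Complex.ofReal_re]
    _ ≤ ‖(inner ℂ (∑ k, β k • ψ k) f : ℂ)‖ := Complex.re_le_norm _
    _ ≤ _ := norm_inner_le_norm _ _
  have h2 : ‖(∑ k, β k • ψ k)‖ ^ 2 ≤ r₂ * S := by
    have := hriesz β; rwa [habs β] at this
  have h3 : S * S ≤ (r₂ * S) * ‖f‖ ^ 2 := by
    calc S * S ≤ (‖(∑ k, β k • ψ k)‖ * ‖f‖) * (‖(∑ k, β k • ψ k)‖ * ‖f‖) :=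
          mul_le_mul h1 h1 hS0 (mul_nonneg (norm_nonneg _) (norm_nonneg _))
    _ = ‖(∑ k, β k • ψ k)‖ ^ 2 * ‖f‖ ^ 2 := by ring
    _ ≤ (r₂ * S) * ‖f‖ ^ 2 := mul_le_mul_of_nonneg_right h2 (sq_nonneg _)
  show S ≤ r₂ * ‖f‖ ^ 2
  rcases eq_or_lt_of_le hS0 with h | h
  · rw [← h]; positivity
  · nlinarith [h3, h]

lemma aux_frame_lower (hr₁ : 0 < r₁)
    (hriesz : ∀ b : Fin q → ℂ, r₁ * ∑ k, ‖b k‖ ^ 2 ≤ ‖∑ k, b k • ψ k‖ ^ 2)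
    (f : H) (c : Fin q → ℂ) (hc : ∑ k, c k • ψ k = f) :
    r₁ * ‖f‖ ^ 2 ≤ ∑ k, ‖(inner ℂ (ψ k) f : ℂ)‖ ^ 2 := by
  set β : Fin q → ℂ := fun k => inner ℂ (ψ k) f with hβ
  set S : ℝ := ∑ k, ‖β k‖ ^ 2 with hS
  set C : ℝ := ∑ k, ‖c k‖ ^ 2 with hC
  have habs : ∀ b : Fin q → ℂ, ∑ k, ‖b k‖ ^ 2 = ∑ k, ‖b k‖ ^ 2 := by
    intro b; rfl
  have hS0 : 0 ≤ S := Finset.sum_nonneg fun k _ => sq_nonneg _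
  have hrl : r₁ * C ≤ ‖f‖ ^ 2 := by
    have := hriesz c; rw [habs c, hc] at this; exact this
  set cE : EuclideanSpace ℂ (Fin q) := (WithLp.equiv 2 (Fin q → ℂ)).symm c with hcEdef
  set βE : EuclideanSpace ℂ (Fin q) := (WithLp.equiv 2 (Fin q → ℂ)).symm β with hβEdef
  have hcE : ‖cE‖ ^ 2 = C := by
    rw [EuclideanSpace.norm_eq, Real.sq_sqrt (Finset.sum_nonneg fun k _ => sq_nonneg _)]
    rfl
  have hβE : ‖βE‖ ^ 2 = S := by
    rw [EuclideanSpace.norm_eq, Real.sq_sqrt (Finset.sum_nonneg fun k _ => sq_nonneg _)]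
    rfl
  have hff : (inner ℂ cE βE : ℂ) = inner ℂ f f := by
    calc (inner ℂ cE βE : ℂ) = ∑ k, star (c k) * (inner ℂ (ψ k) f : ℂ) := by rw [EuclideanSpace.inner_eq_star_dotProduct, dotProduct_comm]; rfl
    _ = inner ℂ (∑ k, c k • ψ k) f := by
        rw [sum_inner]
        refine Finset.sum_congr rfl fun k _ => ?_
        rw [inner_smul_left]
        rfl
    _ = inner ℂ f f := by rw [hc]
  have h1 : ‖f‖ ^ 2 ≤ ‖cE‖ * ‖βE‖ := by
    calc ‖f‖ ^ 2 = Complex.re (inner ℂ f f : ℂ) := by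
          simpa using (@inner_self_eq_norm_sq ℂ _ _ _ _ f).symm
    _ = Complex.re (inner ℂ cE βE : ℂ) := by rw [hff]
    _ ≤ ‖(inner ℂ cE βE : ℂ)‖ := Complex.re_le_norm _
    _ ≤ _ := norm_inner_le_norm _ _
  have h4 : (‖f‖ ^ 2) * (‖f‖ ^ 2) ≤ C * S := by
    calc (‖f‖ ^ 2) * (‖f‖ ^ 2) ≤ (‖cE‖ * ‖βE‖) * (‖cE‖ * ‖βE‖) :=
          mul_le_mul h1 h1 (sq_nonneg _) (mul_nonneg (norm_nonneg _) (norm_nonneg _))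
    _ = ‖cE‖ ^ 2 * ‖βE‖ ^ 2 := by ring
    _ = C * S := by rw [hcE, hβE]
  show r₁ * ‖f‖ ^ 2 ≤ S
  rcases eq_or_lt_of_le (sq_nonneg ‖f‖) with h | h
  · rw [← h, mul_zero]; exact hS0
  · have h5 : r₁ * ((‖f‖ ^ 2) * (‖f‖ ^ 2)) ≤ (‖f‖ ^ 2) * S := by
      calc r₁ * ((‖f‖ ^ 2) * (‖f‖ ^ 2)) ≤ r₁ * (C * S) := mul_le_mul_of_nonneg_left h4 hr₁.le
      _ = (r₁ * C) * S := by ring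
      _ ≤ (‖f‖ ^ 2) * S := mul_le_mul_of_nonneg_right hrl hS0
    nlinarith [h5, h]

end FrameAux
open Matrix in
/-- `√r₁ cos∠(G,F) ≤ σ_min(A) ≤ √r₂ cos∠(G,F)`, and the induced bounds on
`sec∠(G,F)`. -/
theorem stmt_2 {H : Type*} [NormedAddCommGroup H] [InnerProductSpace ℂ H] [CompleteSpace H]
    {q p : ℕ} (ψ : Fin q → H) (φ : Fin p → H) (hφ : Orthonormal ℂ φ)
    (r₁ r₂ : ℝ) (hr₁ : 0 < r₁) (hr₁₂ : r₁ ≤ r₂)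
    (hriesz : ∀ b : Fin q → ℂ,
      r₁ * ∑ k, ‖b k‖ ^ 2 ≤ ‖∑ k, b k • ψ k‖ ^ 2 ∧
        ‖∑ k, b k • ψ k‖ ^ 2 ≤ r₂ * ∑ k, ‖b k‖ ^ 2)
    (G F : Submodule ℂ H) [CompleteSpace G] [CompleteSpace F]
    (hG : G = Submodule.span ℂ (Set.range φ)) (hF : F = Submodule.span ℂ (Set.range ψ))
    (A : Matrix (Fin q) (Fin p) ℂ) (hA : ∀ k l, A k l = inner ℂ (ψ k) (φ l)) :
    Real.sqrt r₁ * cosAngle G F ≤ sigmaMin A ∧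
    sigmaMin A ≤ Real.sqrt r₂ * cosAngle G F ∧
    (0 < cosAngle G F →
      1 / cosAngle G F ≤ Real.sqrt r₂ / sigmaMin A ∧
      Real.sqrt r₂ / sigmaMin A ≤ Real.sqrt (r₂ / r₁) * (1 / cosAngle G F)) := by
  rcases Nat.eq_zero_or_pos p with hp | hp
  · -- degenerate case p = 0
    subst hp
    haveI : Subsingleton (Matrix (Fin 0) (Fin 0) ℂ) :=
      ⟨fun a b => by ext i j; exact i.elim0⟩
    have hσ : sigmaMin A = 0 := by
      show Real.sqrt (sInf {r : ℝ | (r : ℂ) ∈ spectrum ℂ (Aᴴ * A)}) = 0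
      have hempty : {r : ℝ | (r : ℂ) ∈ spectrum ℂ (Aᴴ * A)} = ∅ := by
        ext r
        simp [spectrum.mem_iff, isUnit_of_subsingleton]
      rw [hempty, Real.sInf_empty, Real.sqrt_zero]
    have hcos : cosAngle G F = 0 := by
      have hG0 : G = ⊥ := by
        rw [hG, Set.range_eq_empty φ, Submodule.span_empty]
      have hempty : {a : H | a ∈ G ∧ ‖a‖ = 1} = ∅ := by
        ext a
        simp only [Set.mem_setOf_eq, hG0, Submodule.mem_bot, Set.mem_empty_iff_false,
          iff_false, not_and]
        rintro rfl
        simp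
      show sInf _ = 0
      rw [hempty, Set.image_empty, Real.sInf_empty]
    refine ⟨by rw [hσ, hcos, mul_zero], by rw [hσ, hcos, mul_zero], fun hc => ?_⟩
    rw [hcos] at hc
    exact absurd hc (lt_irrefl 0)
  · -- main case p > 0
    obtain ⟨hlmin0, ⟨x₀, hx₀norm, hx₀val⟩, hmin⟩ := aux_lambdaMin_rayleigh hp A
    have hr₂ : 0 < r₂ := hr₁.trans_le hr₁₂
    have hψF : ∀ k, ψ k ∈ F := fun k => by
      rw [hF]; exact Submodule.subset_span ⟨k, rfl⟩
    have hproj : ∀ (v : H) (k : Fin q),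
        (inner ℂ (ψ k) v : ℂ) = inner ℂ (ψ k) ((Submodule.orthogonalProjection F v : H)) := by
      intro v k
      have h := Submodule.sub_starProjection_mem_orthogonal (K := F) v
      have h0 : (inner ℂ (ψ k) (v - (Submodule.orthogonalProjection F v : H)) : ℂ) = 0 :=
        Submodule.inner_right_of_mem_orthogonal (hψF k) h
      rw [inner_sub_right] at h0
      linear_combination h0
    have hmemG : ∀ x : Fin p → ℂ, (∑ l, x l • φ l) ∈ G := fun x => by
      rw [hG]
      exact Submodule.sum_mem _ fun l _ =>
        Submodule.smul_mem _ _ (Submodule.subset_span ⟨l, rfl⟩)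
    have hnormsum : ∀ x : Fin p → ℂ, ‖∑ l, x l • φ l‖ ^ 2 = ∑ l, ‖x l‖ ^ 2 := by
      intro x
      have h := hφ.inner_sum x x Finset.univ
      have h2 := congrArg Complex.re h
      have h5 : Complex.re (inner ℂ (∑ l, x l • φ l) (∑ l, x l • φ l)) = ‖∑ l, x l • φ l‖ ^ 2 := by
        simpa using @inner_self_eq_norm_sq ℂ _ _ _ _ (∑ l, x l • φ l)
      rw [h5, Complex.re_sum] at h2
      rw [h2]
      refine Finset.sum_congr rfl fun i _ => ?_
      rw [mul_comm, aux_conjpair, Complex.ofReal_re]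
    have hAx : ∀ (x : Fin p → ℂ) (k : Fin q),
        (A.mulVec x) k = inner ℂ (ψ k) (∑ l, x l • φ l) := by
      intro x k
      rw [inner_sum]
      simp_rw [inner_smul_right, ← hA]
      rw [Matrix.mulVec, dotProduct]
      exact Finset.sum_congr rfl fun l _ => mul_comm _ _
    have hkey : ∀ x : Fin p → ℂ, ∑ k, ‖(A *ᵥ x) k‖ ^ 2
        = ∑ k, ‖(inner ℂ (ψ k) ((Submodule.orthogonalProjection F (∑ l, x l • φ l) : H)) : ℂ)‖ ^ 2 := by
      intro x
      refine Finset.sum_congr rfl fun k _ => ?_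
      rw [hAx x k, hproj _ k]
    have hup : ∀ f : H, ∑ k, ‖(inner ℂ (ψ k) f : ℂ)‖ ^ 2 ≤ r₂ * ‖f‖ ^ 2 :=
      aux_frame_upper hr₂ (fun b => (hriesz b).2)
    have hlow : ∀ f : H, f ∈ F → r₁ * ‖f‖ ^ 2 ≤ ∑ k, ‖(inner ℂ (ψ k) f : ℂ)‖ ^ 2 := by
      intro f hf
      rw [hF, Submodule.mem_span_range_iff_exists_fun] at hf
      obtain ⟨c, hc⟩ := hf
      exact aux_frame_lower hr₁ (fun b => (hriesz b).1) f c hc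
    have hcosdef : cosAngle G F
        = sInf ((fun a => ‖(Submodule.orthogonalProjection F a : H)‖) '' {a : H | a ∈ G ∧ ‖a‖ = 1}) := rfl
    have hbdd : BddBelow ((fun a => ‖(Submodule.orthogonalProjection F a : H)‖) ''
        {a : H | a ∈ G ∧ ‖a‖ = 1}) := ⟨0, by rintro _ ⟨a, _, rfl⟩; exact norm_nonneg _⟩
    have hne : ((fun a => ‖(Submodule.orthogonalProjection F a : H)‖) ''
        {a : H | a ∈ G ∧ ‖a‖ = 1}).Nonempty :=
      ⟨_, ⟨φ ⟨0, hp⟩, ⟨by rw [hG]; exact Submodule.subset_span ⟨_, rfl⟩, hφ.1 _⟩, rfl⟩⟩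
    have hcos0 : 0 ≤ cosAngle G F := by
      rw [hcosdef]
      apply Real.sInf_nonneg
      rintro _ ⟨a, _, rfl⟩
      exact norm_nonneg _
    have hσ0 : 0 ≤ sigmaMin A := Real.sqrt_nonneg _
    have hσsq : sigmaMin A ^ 2 = lambdaMin (Aᴴ * A) := Real.sq_sqrt hlmin0
    -- norm of Euclidean vectors
    have hEnorm : ∀ x : EuclideanSpace ℂ (Fin p), ‖x‖ ^ 2 = ∑ l, ‖(x : Fin p → ℂ) l‖ ^ 2 := by
      intro x
      rw [EuclideanSpace.norm_eq, Real.sq_sqrt (Finset.sum_nonneg fun l _ => sq_nonneg _)]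
    -- Lower bound
    set a₀ : H := ∑ l, (x₀ : Fin p → ℂ) l • φ l with ha₀def
    have ha₀norm : ‖a₀‖ = 1 := by
      have h1 : ‖a₀‖ ^ 2 = ‖x₀‖ ^ 2 := by
        rw [ha₀def, hnormsum, hEnorm x₀]
      rw [hx₀norm, one_pow] at h1
      calc ‖a₀‖ = Real.sqrt (‖a₀‖ ^ 2) := (Real.sqrt_sq (norm_nonneg _)).symm
      _ = 1 := by rw [h1, Real.sqrt_one]
    have hcle : cosAngle G F ≤ ‖(Submodule.orthogonalProjection F a₀ : H)‖ := by
      rw [hcosdef]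
      exact csInf_le hbdd ⟨a₀, ⟨hmemG _, ha₀norm⟩, rfl⟩
    have hchain : r₁ * ‖(Submodule.orthogonalProjection F a₀ : H)‖ ^ 2 ≤ lambdaMin (Aᴴ * A) := by
      rw [← hx₀val, hkey ((x₀ : Fin p → ℂ))]
      exact hlow _ (SetLike.coe_mem _)
    have hlower : Real.sqrt r₁ * cosAngle G F ≤ sigmaMin A := by
      refine aux_sq_le ?_ hσ0
      rw [mul_pow, Real.sq_sqrt hr₁.le, hσsq]
      refine le_trans ?_ hchain
      exact mul_le_mul_of_nonneg_left (pow_le_pow_left₀ hcos0 hcle 2) hr₁.le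
    -- Upper bound
    have hub : ∀ a : H, a ∈ G → ‖a‖ = 1 →
        sigmaMin A ≤ Real.sqrt r₂ * ‖(Submodule.orthogonalProjection F a : H)‖ := by
      intro a haG ha1
      rw [hG, Submodule.mem_span_range_iff_exists_fun] at haG
      obtain ⟨x, hx⟩ := haG
      have hxE1 : ‖((WithLp.equiv 2 (Fin p → ℂ)).symm x : EuclideanSpace ℂ (Fin p))‖ = 1 := by
        have h1 : ‖((WithLp.equiv 2 (Fin p → ℂ)).symm x : EuclideanSpace ℂ (Fin p))‖ ^ 2
            = ‖a‖ ^ 2 := by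
          rw [hEnorm, ← hx, hnormsum]
          rfl
        rw [ha1, one_pow] at h1
        calc ‖((WithLp.equiv 2 (Fin p → ℂ)).symm x : EuclideanSpace ℂ (Fin p))‖
            = Real.sqrt (‖((WithLp.equiv 2 (Fin p → ℂ)).symm x : EuclideanSpace ℂ (Fin p))‖ ^ 2) :=
              (Real.sqrt_sq (norm_nonneg _)).symm
        _ = 1 := by rw [h1, Real.sqrt_one]
      have h8 : lambdaMin (Aᴴ * A) ≤ ∑ k, ‖(A *ᵥ x) k‖ ^ 2 :=
        hmin ((WithLp.equiv 2 (Fin p → ℂ)).symm x) hxE1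
      have h7 : sigmaMin A ^ 2 ≤ r₂ * ‖(Submodule.orthogonalProjection F a : H)‖ ^ 2 := by
        rw [hσsq]
        refine le_trans h8 ?_
        rw [hkey x, hx]
        exact hup _
      refine aux_sq_le ?_ (by positivity)
      rw [mul_pow, Real.sq_sqrt hr₂.le]
      exact h7
    have hupper : sigmaMin A ≤ Real.sqrt r₂ * cosAngle G F := by
      have hlb : ∀ y ∈ ((fun a => ‖(Submodule.orthogonalProjection F a : H)‖) ''
          {a : H | a ∈ G ∧ ‖a‖ = 1}), sigmaMin A / Real.sqrt r₂ ≤ y := by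
        rintro _ ⟨a, ⟨haG, ha1⟩, rfl⟩
        rw [div_le_iff₀ (Real.sqrt_pos.2 hr₂)]
        rw [mul_comm]
        exact hub a haG ha1
      have h9 : sigmaMin A / Real.sqrt r₂ ≤ cosAngle G F := by
        rw [hcosdef]
        exact le_csInf hne hlb
      calc sigmaMin A = Real.sqrt r₂ * (sigmaMin A / Real.sqrt r₂) := by
            field_simp
      _ ≤ Real.sqrt r₂ * cosAngle G F :=
            mul_le_mul_of_nonneg_left h9 (Real.sqrt_nonneg _)
    refine ⟨hlower, hupper, fun hc => ?_⟩
    have hσpos : 0 < sigmaMin A :=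
      lt_of_lt_of_le (mul_pos (Real.sqrt_pos.2 hr₁) hc) hlower
    constructor
    · rw [div_le_div_iff₀ hc hσpos, one_mul]
      exact hupper
    · have hsq : Real.sqrt (r₂ / r₁) = Real.sqrt r₂ / Real.sqrt r₁ := Real.sqrt_div hr₂.le r₁
      rw [hsq, div_mul_div_comm, mul_one]
      gcongr
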